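/- Let R be a PVMD and P a t-prime ideal of R that is not t-maximal. Then T(P) ⊊ Ω(P) if and only if P = (P²)_t and P = √I for some t-invertible ideal I of R. -/

import Mathlib

/-!
Common definitions: star operations (`v`- and `t`-closure), `t`-ideals, `t`-invertibility,
PVMDs, overrings, `t`-linked and `t`-flat overrings, localizations inside the quotient
field, Nagata and Kaplansky transforms, endomorphism rings of ideals.
-/

open scoped Classical

namespace PVMDPaper

noncomputable section

section Generic

variable (A : Type*) [CommRing A] (K : Type*) [Field K] [Algebra A K]

/-- The image of an integral ideal of `A` inside the field `K`, as an `A`-submodule of `K`. -/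
def toK (I : Ideal A) : Submodule A K := Submodule.map (Algebra.linearMap A K) I

variable {A K}

/-- The dual `I⁻¹ = (A : I) = {x ∈ K : x I ⊆ A}` of a submodule of `K`. -/
def dual (I : Submodule A K) : Submodule A K := 1 / I

/-- The `v`-closure `I_v = (I⁻¹)⁻¹`. -/
def vOp (I : Submodule A K) : Submodule A K := 1 / (1 / I)

/-- The `t`-closure `I_t`: the union of `J_v` where `J` ranges over the nonzero finitely
generated submodules `J ≤ I` (the union of this directed family is its supremum). -/
def tOp (I : Submodule A K) : Submodule A K :=
  sSup {V | ∃ J : Submodule A K, J ≠ ⊥ ∧ J.FG ∧ J ≤ I ∧ V = vOp J}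

variable (K)

/-- An (integral) ideal `I` of `A` is a `t`-ideal if `I = I_t`. -/
def IsTIdeal (I : Ideal A) : Prop := tOp (toK A K I) = toK A K I

/-- An ideal `I` is `t`-invertible if `(I I⁻¹)_t = A`. -/
def IsTInvertible (I : Ideal A) : Prop := tOp (toK A K I * dual (toK A K I)) = 1

/-- A `t`-maximal ideal: an ideal maximal in the set of proper integral `t`-ideals. -/
def IsTMaximal (M : Ideal A) : Prop :=
  M ≠ ⊤ ∧ IsTIdeal K M ∧ ∀ J : Ideal A, J ≠ ⊤ → IsTIdeal K J → M ≤ J → J = M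

variable (A)

/-- `A` is a Prüfer `v`-multiplication domain: every nonzero finitely generated ideal
is `t`-invertible. -/
def IsPVMD : Prop := ∀ I : Ideal A, I ≠ ⊥ → I.FG → IsTInvertible K I

/-- `Spec_t(A)` is Noetherian: the ascending chain condition on radical `t`-ideals. -/
def TSpecNoetherian : Prop :=
  ∀ f : ℕ →o Ideal A, (∀ n, IsTIdeal K (f n) ∧ (f n).radical = f n) →
    ∃ n, ∀ m, n ≤ m → f m = f n

variable {A K}

/-- A submodule of `K` is a subring of `K` iff it contains `1` and is closed under
multiplication (being an additive subgroup already). -/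
def IsSubringOf (S : Submodule A K) : Prop :=
  (1 : K) ∈ S ∧ ∀ x ∈ S, ∀ y ∈ S, x * y ∈ S

variable (K)

/-- The localization `A_P = {a/s : a ∈ A, s ∈ A ∖ P}` viewed as a subset of `K`. -/
def loc (P : Ideal A) : Set K :=
  {x | ∃ a s : A, s ∉ P ∧ x * algebraMap A K s = algebraMap A K a}

/-- The set `J A_P = {a/s : a ∈ J, s ∈ A ∖ P} ⊆ K`. -/
def locIdealAt (J P : Ideal A) : Set K :=
  {x | ∃ a ∈ J, ∃ s : A, s ∉ P ∧ x * algebraMap A K s = algebraMap A K a}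

/-- `Z(A, I)`: the set of zero divisors on `A/I`. -/
def ZSet (I : Ideal A) : Set A := {x | ∃ a : A, a ∉ I ∧ x * a ∈ I}

/-- `Q` is a maximal prime ideal of `Z(A,I)`: a prime contained in `Z(A,I)`, maximal
(under inclusion) among the primes contained in `Z(A,I)`. -/
def MaxPrimeOfZ (I Q : Ideal A) : Prop :=
  Q.IsPrime ∧ (Q : Set A) ⊆ ZSet I ∧
    ∀ Q' : Ideal A, Q'.IsPrime → (Q' : Set A) ⊆ ZSet I → Q ≤ Q' → Q' = Q

end Generic

section Overring

variable {R : Type*} [CommRing R] [IsDomain R]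
variable {K : Type*} [Field K] [Algebra R K] [IsFractionRing R K]

/-- The extension `IT` of an ideal `I` of `R` to an overring `T`, as a `T`-submodule of `K`. -/
def extendI (I : Ideal R) (T : Subalgebra R K) : Submodule T K :=
  Submodule.span T (algebraMap R K '' (I : Set R))

/-- The extension `IT` of an `R`-submodule `I` of `K` to an overring `T`. -/
def extendS (I : Submodule R K) (T : Subalgebra R K) : Submodule T K :=
  Submodule.span T (I : Set K)

/-- An overring `T` of `R` is `t`-linked over `R` if `(IT)⁻¹ = T` for each finitely
generated ideal `I` of `R` with `I⁻¹ = R`. -/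
def IsTLinked (T : Subalgebra R K) : Prop :=
  ∀ I : Ideal R, I.FG → dual (toK R K I) = 1 → dual (extendI I T) = 1

/-- An overring `T` of `R` is `t`-flat over `R` if `T_M = R_{M ∩ R}` for each
`t`-maximal ideal `M` of `T`. -/
def IsTFlat (T : Subalgebra R K) : Prop :=
  ∀ M : Ideal T, IsTMaximal K M → loc K M = loc K (M.comap (algebraMap R T))

variable (R K)

/-- `R` is a `tQR`-domain: a PVMD all of whose `t`-linked overrings are localizations
of `R` at multiplicative sets. -/
def IsTQR : Prop :=
  IsPVMD R K ∧ ∀ T : Subalgebra R K, IsTLinked T → ∃ S : Submonoid R,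
    (T : Set K) = {x | ∃ a : R, ∃ s ∈ S, x * algebraMap R K s = algebraMap R K a}

variable {R K}
variable (K)

/-- The endomorphism ring `(I : I) = {x ∈ K : x I ⊆ I}` of an ideal `I`, as an
overring of `R`. -/
def endoRing (I : Ideal R) : Subalgebra R K where
  carrier := {x : K | ∀ y ∈ toK R K I, x * y ∈ toK R K I}
  mul_mem' := by
    intro a b ha hb y hy
    rw [mul_assoc]
    exact ha _ (hb _ hy)
  one_mem' := by
    intro y hy
    rwa [one_mul]
  add_mem' := by
    intro a b ha hb y hy
    rw [add_mul]
    exact Submodule.add_mem _ (ha y hy) (hb y hy)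
  zero_mem' := by
    intro y hy
    rw [zero_mul]
    exact Submodule.zero_mem _
  algebraMap_mem' := by
    intro r y hy
    rw [← Algebra.smul_def]
    exact Submodule.smul_mem _ r hy

set_option synthInstance.maxHeartbeats 400000 in
/-- The ideal `I`, viewed as an ideal of its endomorphism ring `(I : I)`. -/
def idealInEndo (I : Ideal R) : Ideal (endoRing K I) where
  carrier := {x | (x : K) ∈ toK R K I}
  add_mem' := by
    intro a b ha hb
    simp only [Set.mem_setOf_eq] at *
    rw [AddMemClass.coe_add]
    exact Submodule.add_mem _ ha hb
  zero_mem' := by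
    simp only [Set.mem_setOf_eq, ZeroMemClass.coe_zero]
    exact Submodule.zero_mem _
  smul_mem' := by
    intro c x hx
    simp only [Set.mem_setOf_eq] at *
    rw [smul_eq_mul, MulMemClass.coe_mul]
    exact c.2 _ hx

/-- The Kaplansky transform `Ω(I) = {u ∈ K : ∀ a ∈ I, ∃ n ≥ 1, u aⁿ ∈ R}`, as an
overring of `R`. -/
def kaplansky (I : Ideal R) : Subalgebra R K where
  carrier := {u : K | ∀ a ∈ I, ∃ n : ℕ, 0 < n ∧
    ∃ r : R, u * (algebraMap R K a) ^ n = algebraMap R K r}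
  mul_mem' := by
    intro u v hu hv a ha
    obtain ⟨n, hn, r, hr⟩ := hu a ha
    obtain ⟨m, hm, s, hs⟩ := hv a ha
    refine ⟨n + m, by omega, r * s, ?_⟩
    rw [map_mul, ← hr, ← hs, pow_add]
    ring
  one_mem' := by
    intro a ha
    exact ⟨1, one_pos, a, by rw [pow_one, one_mul]⟩
  add_mem' := by
    intro u v hu hv a ha
    obtain ⟨n, hn, r, hr⟩ := hu a ha
    obtain ⟨m, hm, s, hs⟩ := hv a ha
    refine ⟨n + m, by omega, r * a ^ m + s * a ^ n, ?_⟩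
    rw [map_add, map_mul, map_mul, map_pow, map_pow, ← hr, ← hs, pow_add, add_mul]
    ring
  zero_mem' := by
    intro a ha
    exact ⟨1, one_pos, 0, by rw [map_zero, zero_mul]⟩
  algebraMap_mem' := by
    intro r a ha
    exact ⟨1, one_pos, r * a, by rw [map_mul, pow_one]⟩

/-- The Nagata (ideal) transform `T(I) = ⋃_{n ≥ 1} (R : Iⁿ)`, as an overring of `R`. -/
def nagata (I : Ideal R) : Subalgebra R K where
  carrier := {x : K | ∃ n : ℕ, ∀ y ∈ I ^ (n + 1),
    ∃ r : R, x * algebraMap R K y = algebraMap R K r}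
  mul_mem' := by
    intro x x' hx hx'
    obtain ⟨n, hn⟩ := hx
    obtain ⟨m, hm⟩ := hx'
    refine ⟨n + m + 1, fun y hy => ?_⟩
    rw [show n + m + 1 + 1 = (n + 1) + (m + 1) by omega, pow_add] at hy
    refine Submodule.mul_induction_on hy ?_ ?_
    · intro a ha b hb
      obtain ⟨r, hr⟩ := hn a ha
      obtain ⟨s, hs⟩ := hm b hb
      refine ⟨r * s, ?_⟩
      rw [map_mul, map_mul, ← hr, ← hs]
      ring
    · rintro y1 y2 ⟨r1, h1⟩ ⟨r2, h2⟩
      exact ⟨r1 + r2, by rw [map_add, map_add, mul_add, h1, h2]⟩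
  one_mem' := ⟨0, fun y _ => ⟨y, by rw [one_mul]⟩⟩
  add_mem' := by
    intro x x' hx hx'
    obtain ⟨n, hn⟩ := hx
    obtain ⟨m, hm⟩ := hx'
    refine ⟨n + m + 1, fun y hy => ?_⟩
    have h1 : y ∈ I ^ (n + 1) := Ideal.pow_le_pow_right (by omega) hy
    have h2 : y ∈ I ^ (m + 1) := Ideal.pow_le_pow_right (by omega) hy
    obtain ⟨r, hr⟩ := hn y h1
    obtain ⟨s, hs⟩ := hm y h2
    exact ⟨r + s, by rw [map_add, add_mul, hr, hs]⟩
  zero_mem' := ⟨0, fun y _ => ⟨0, by rw [map_zero, zero_mul]⟩⟩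
  algebraMap_mem' := by
    intro r
    exact ⟨0, fun y _ => ⟨r * y, by rw [map_mul]⟩⟩

end Overring

section Basics

set_option linter.unusedSectionVars false
variable {R : Type*} [CommRing R] [IsDomain R]
variable {K : Type*} [Field K] [Algebra R K] [IsFractionRing R K]

lemma mem_dual {X : Submodule R K} {x : K} :
    x ∈ dual X ↔ ∀ y ∈ X, x * y ∈ (1 : Submodule R K) :=
  Submodule.mem_div_iff_forall_mul_mem

lemma one_mem_one : (1 : K) ∈ (1 : Submodule R K) := by
  rw [Submodule.mem_one]
  exact ⟨1, map_one _⟩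

lemma mul_mem_one {x y : K} (hx : x ∈ (1 : Submodule R K)) (hy : y ∈ (1 : Submodule R K)) :
    x * y ∈ (1 : Submodule R K) := by
  rw [Submodule.mem_one] at hx hy ⊢
  obtain ⟨r, rfl⟩ := hx
  obtain ⟨s, rfl⟩ := hy
  exact ⟨r * s, (map_mul _ _ _)⟩

lemma le_vOp (X : Submodule R K) : X ≤ vOp X := by
  intro x hx
  rw [vOp, Submodule.mem_div_iff_forall_mul_mem]
  intro y hy
  rw [Submodule.mem_div_iff_forall_mul_mem] at hy
  simpa [mul_comm] using hy x hx

lemma dual_anti {X Y : Submodule R K} (h : X ≤ Y) : dual Y ≤ dual X := by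
  intro q hq
  rw [mem_dual] at *
  exact fun y hy => hq y (h hy)

lemma vOp_mono {X Y : Submodule R K} (h : X ≤ Y) : vOp X ≤ vOp Y :=
  dual_anti (dual_anti h)

lemma dual_vOp (X : Submodule R K) : dual (vOp X) = dual X :=
  le_antisymm (dual_anti (le_vOp X)) (le_vOp (dual X))

lemma vOp_idem (X : Submodule R K) : vOp (vOp X) = vOp X := by
  show dual (dual (vOp X)) = vOp X
  rw [dual_vOp]
  rfl

lemma one_div_one : ((1 : Submodule R K) / 1) = 1 := by
  apply le_antisymm
  · intro x hx
    rw [Submodule.mem_div_iff_forall_mul_mem] at hx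
    simpa using hx 1 one_mem_one
  · intro x hx
    rw [Submodule.mem_div_iff_forall_mul_mem]
    exact fun y hy => mul_mem_one hx hy

lemma vOp_one : vOp (1 : Submodule R K) = 1 := by
  unfold vOp
  rw [one_div_one, one_div_one]

lemma tOp_bot : tOp (⊥ : Submodule R K) = ⊥ := by
  unfold tOp
  suffices h : {V | ∃ J : Submodule R K, J ≠ ⊥ ∧ J.FG ∧ J ≤ ⊥ ∧ V = vOp J} = ∅ by
    rw [h]; exact sSup_empty
  ext V
  simp only [Set.mem_setOf_eq, Set.mem_empty_iff_false, iff_false]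
  rintro ⟨J, hJ, -, hle, -⟩
  exact hJ (le_bot_iff.mp hle)

lemma mem_tOp {X : Submodule R K} (hX : X ≠ ⊥) {x : K} :
    x ∈ tOp X ↔ ∃ J : Submodule R K, J ≠ ⊥ ∧ J.FG ∧ J ≤ X ∧ x ∈ vOp J := by
  obtain ⟨x₀, hx₀X, hx₀⟩ := Submodule.exists_mem_ne_zero_of_ne_bot hX
  have hne : {V | ∃ J : Submodule R K, J ≠ ⊥ ∧ J.FG ∧ J ≤ X ∧ V = vOp J}.Nonempty := by
    refine ⟨vOp (Submodule.span R {x₀}), Submodule.span R {x₀}, ?_, Submodule.fg_span_singleton _,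
      Submodule.span_le.mpr (Set.singleton_subset_iff.mpr hx₀X), rfl⟩
    simpa [Submodule.span_singleton_eq_bot] using hx₀
  have hdir : DirectedOn (fun a b => a ≤ b)
      {V | ∃ J : Submodule R K, J ≠ ⊥ ∧ J.FG ∧ J ≤ X ∧ V = vOp J} := by
    rintro V₁ ⟨J₁, h₁b, h₁f, h₁l, rfl⟩ V₂ ⟨J₂, h₂b, h₂f, h₂l, rfl⟩
    refine ⟨vOp (J₁ ⊔ J₂), ⟨J₁ ⊔ J₂, ?_, h₁f.sup h₂f, sup_le h₁l h₂l, rfl⟩,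
      vOp_mono le_sup_left, vOp_mono le_sup_right⟩
    intro h
    exact h₁b (le_bot_iff.mp (h ▸ le_sup_left))
  rw [tOp, Submodule.mem_sSup_of_directed hne hdir]
  constructor
  · rintro ⟨V, ⟨J, h1, h2, h3, rfl⟩, hx⟩
    exact ⟨J, h1, h2, h3, hx⟩
  · rintro ⟨J, h1, h2, h3, hx⟩
    exact ⟨vOp J, ⟨J, h1, h2, h3, rfl⟩, hx⟩

lemma le_tOp (X : Submodule R K) : X ≤ tOp X := by
  by_cases hX : X = ⊥
  · subst hX; rw [tOp_bot]
  · intro x hx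
    by_cases hx0 : x = 0
    · subst hx0; exact zero_mem _
    · rw [mem_tOp hX]
      refine ⟨Submodule.span R {x}, by simpa [Submodule.span_singleton_eq_bot] using hx0,
        Submodule.fg_span_singleton _, Submodule.span_le.mpr (Set.singleton_subset_iff.mpr hx),
        le_vOp _ (Submodule.mem_span_singleton_self x)⟩

lemma tOp_mono {X Y : Submodule R K} (h : X ≤ Y) : tOp X ≤ tOp Y := by
  by_cases hX : X = ⊥
  · subst hX; rw [tOp_bot]; exact bot_le
  · have hY : Y ≠ ⊥ := fun hY => hX (le_bot_iff.mp (hY ▸ h))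
    intro x hx
    rw [mem_tOp hX] at hx
    rw [mem_tOp hY]
    obtain ⟨J, h1, h2, h3, h4⟩ := hx
    exact ⟨J, h1, h2, h3.trans h, h4⟩

lemma tOp_le_vOp (X : Submodule R K) : tOp X ≤ vOp X := by
  apply sSup_le
  rintro V ⟨J, -, -, h3, rfl⟩
  exact vOp_mono h3

lemma dual_tOp (X : Submodule R K) : dual (tOp X) = dual X := by
  refine le_antisymm (dual_anti (le_tOp X)) ?_
  have : dual X = dual (vOp X) := (dual_vOp X).symm
  rw [this]
  exact dual_anti (tOp_le_vOp X)

lemma tOp_one : tOp (1 : Submodule R K) = 1 :=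
  le_antisymm (by simpa [vOp_one] using tOp_le_vOp (1 : Submodule R K)) (le_tOp 1)


lemma mul_ne_bot {X Y : Submodule R K} (hX : X ≠ ⊥) (hY : Y ≠ ⊥) : X * Y ≠ ⊥ := by
  obtain ⟨x, hx, hx0⟩ := Submodule.exists_mem_ne_zero_of_ne_bot hX
  obtain ⟨y, hy, hy0⟩ := Submodule.exists_mem_ne_zero_of_ne_bot hY
  intro h
  have hm := Submodule.mul_mem_mul hx hy
  rw [h, Submodule.mem_bot] at hm
  exact (mul_ne_zero hx0 hy0) hm

lemma mul_vOp_le (X Y : Submodule R K) : X * vOp Y ≤ vOp (X * Y) := by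
  rw [Submodule.mul_le]
  intro s hs t ht
  rw [vOp, Submodule.mem_div_iff_forall_mul_mem]
  intro q hq
  have hqs : q * s ∈ (1 : Submodule R K) / Y := by
    rw [Submodule.mem_div_iff_forall_mul_mem]
    intro y hy
    have h1 : q * (s * y) ∈ (1 : Submodule R K) := by
      rw [Submodule.mem_div_iff_forall_mul_mem] at hq
      exact hq _ (Submodule.mul_mem_mul hs hy)
    have e : q * s * y = q * (s * y) := by ring
    rw [e]; exact h1
  have h2 := Submodule.mem_div_iff_forall_mul_mem.mp ht _ hqs
  have e : s * t * q = t * (q * s) := by ring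
  rw [e]; exact h2

lemma tOp_idem (X : Submodule R K) : tOp (tOp X) = tOp X := by
  by_cases hX : X = ⊥
  · subst hX; rw [tOp_bot, tOp_bot]
  refine le_antisymm ?_ (le_tOp _)
  have htX : tOp X ≠ ⊥ := fun h => hX (le_bot_iff.mp (h ▸ le_tOp X))
  intro x hx
  obtain ⟨J, hJb, hJf, hJle, hxv⟩ := (mem_tOp htX).mp hx
  obtain ⟨s, hspan⟩ := hJf
  obtain ⟨x₀, hx₀X, hx₀⟩ := Submodule.exists_mem_ne_zero_of_ne_bot hX
  have key : ∀ y ∈ s, ∃ Jy : Submodule R K, Jy ≠ ⊥ ∧ Jy.FG ∧ Jy ≤ X ∧ (y : K) ∈ vOp Jy := by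
    intro y hy
    have : (y : K) ∈ tOp X := hJle (hspan ▸ Submodule.subset_span hy)
    exact (mem_tOp hX).mp this
  choose Jy hJyb hJyf hJyle hJyv using key
  set J' : Submodule R K :=
    Submodule.span R {x₀} ⊔ s.attach.sup (fun y => Jy y.1 y.2) with hJ'def
  have hJ'f : J'.FG := (Submodule.fg_span_singleton _).sup
    (Submodule.fg_finset_sup _ _ (fun y _ => hJyf y.1 y.2))
  have hJ'b : J' ≠ ⊥ := by
    intro h
    apply hx₀
    have hle : Submodule.span R {x₀} ≤ (⊥ : Submodule R K) := h ▸ le_sup_left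
    simpa using Submodule.span_singleton_eq_bot.mp (le_bot_iff.mp hle)
  have hJ'le : J' ≤ X := sup_le (Submodule.span_le.mpr (Set.singleton_subset_iff.mpr hx₀X))
    (Finset.sup_le (fun y _ => hJyle y.1 y.2))
  have hJle' : J ≤ vOp J' := by
    rw [← hspan, Submodule.span_le]
    intro y hy
    have hy' := Finset.mem_coe.mp hy
    have h1 : Jy y hy' ≤ J' :=
      le_trans (Finset.le_sup (f := fun y : {x // x ∈ s} => Jy y.1 y.2)
        (Finset.mem_attach s ⟨y, hy'⟩)) le_sup_right
    exact vOp_mono h1 (hJyv y hy')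
  have hxv' : x ∈ vOp J' := by
    have h1 := vOp_mono hJle' hxv
    rwa [vOp_idem] at h1
  exact (mem_tOp hX).mpr ⟨J', hJ'b, hJ'f, hJ'le, hxv'⟩

lemma mem_mul_tOp {X Y : Submodule R K} (hY : Y ≠ ⊥) {g : K} (hg : g ∈ X * tOp Y) :
    ∃ S₀ T₀ : Submodule R K, S₀.FG ∧ S₀ ≤ X ∧ T₀.FG ∧ T₀ ≠ ⊥ ∧ T₀ ≤ Y ∧ g ∈ S₀ * vOp T₀ := by
  refine Submodule.mul_induction_on hg ?_ ?_
  · intro m hm n hn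
    obtain ⟨T₀, h1, h2, h3, h4⟩ := (mem_tOp hY).mp hn
    exact ⟨Submodule.span R {m}, T₀, Submodule.fg_span_singleton _,
      Submodule.span_le.mpr (Set.singleton_subset_iff.mpr hm), h2, h1, h3,
      Submodule.mul_mem_mul (Submodule.mem_span_singleton_self m) h4⟩
  · rintro a b ⟨S₀, T₀, f1, l1, f2, b2, l2, m2⟩ ⟨S₁, T₁, g1, k1, g2, c2, k2, n2⟩
    refine ⟨S₀ ⊔ S₁, T₀ ⊔ T₁, f1.sup g1, sup_le l1 k1, f2.sup g2, ?_, sup_le l2 k2, ?_⟩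
    · intro h; exact b2 (le_bot_iff.mp (h ▸ le_sup_left))
    · exact add_mem
        (mul_le_mul' le_sup_left (vOp_mono le_sup_left) m2)
        (mul_le_mul' le_sup_right (vOp_mono le_sup_right) n2)

lemma tOp_mul_tOp_right (X Y : Submodule R K) : tOp (X * tOp Y) = tOp (X * Y) := by
  by_cases hY : Y = ⊥
  · subst hY; simp [tOp_bot, Submodule.mul_bot]
  by_cases hX : X = ⊥
  · subst hX; rw [Submodule.bot_mul, Submodule.bot_mul]
  refine le_antisymm ?_ (tOp_mono (mul_le_mul' le_rfl (le_tOp Y)))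
  have htY : tOp Y ≠ ⊥ := fun h => hY (le_bot_iff.mp (h ▸ le_tOp Y))
  have hXtY : X * tOp Y ≠ ⊥ := mul_ne_bot hX htY
  intro x hx
  obtain ⟨J, hJb, hJf, hJle, hxv⟩ := (mem_tOp hXtY).mp hx
  obtain ⟨s, hspan⟩ := hJf
  have key : ∀ y ∈ s, ∃ S₀ T₀ : Submodule R K,
      S₀.FG ∧ S₀ ≤ X ∧ T₀.FG ∧ T₀ ≠ ⊥ ∧ T₀ ≤ Y ∧ (y : K) ∈ S₀ * vOp T₀ := by
    intro y hy
    exact mem_mul_tOp hY (hJle (hspan ▸ Submodule.subset_span hy))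
  choose Sy Ty f1 l1 f2 b2 l2 m2 using key
  obtain ⟨y₀, hy₀Y, hy₀⟩ := Submodule.exists_mem_ne_zero_of_ne_bot hY
  set Ss : Submodule R K := s.attach.sup (fun y => Sy y.1 y.2) with hSsdef
  set Ts : Submodule R K :=
    Submodule.span R {y₀} ⊔ s.attach.sup (fun y => Ty y.1 y.2) with hTsdef
  have hTsb : Ts ≠ ⊥ := by
    intro h
    apply hy₀
    have hle : Submodule.span R {y₀} ≤ (⊥ : Submodule R K) := h ▸ le_sup_left
    simpa using Submodule.span_singleton_eq_bot.mp (le_bot_iff.mp hle)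
  have hSsf : Ss.FG := Submodule.fg_finset_sup _ _ (fun y _ => f1 y.1 y.2)
  have hTsf : Ts.FG := (Submodule.fg_span_singleton _).sup
    (Submodule.fg_finset_sup _ _ (fun y _ => f2 y.1 y.2))
  have hSsle : Ss ≤ X := Finset.sup_le (fun y _ => l1 y.1 y.2)
  have hTsle : Ts ≤ Y := sup_le (Submodule.span_le.mpr (Set.singleton_subset_iff.mpr hy₀Y))
    (Finset.sup_le (fun y _ => l2 y.1 y.2))
  have hJle' : J ≤ Ss * vOp Ts := by
    rw [← hspan, Submodule.span_le]
    intro y hy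
    have hy' := Finset.mem_coe.mp hy
    have h1 : Sy y hy' ≤ Ss := Finset.le_sup (f := fun y : {x // x ∈ s} => Sy y.1 y.2)
      (Finset.mem_attach s ⟨y, hy'⟩)
    have h2 : Ty y hy' ≤ Ts :=
      le_trans (Finset.le_sup (f := fun y : {x // x ∈ s} => Ty y.1 y.2)
        (Finset.mem_attach s ⟨y, hy'⟩)) le_sup_right
    exact mul_le_mul' h1 (vOp_mono h2) (m2 y hy')
  have hSsb : Ss ≠ ⊥ := by
    intro h
    apply hJb
    rw [h, Submodule.bot_mul] at hJle'
    exact le_bot_iff.mp hJle'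
  have hx' : x ∈ vOp (Ss * Ts) := by
    have h1 := vOp_mono hJle' hxv
    have h2 := vOp_mono (mul_vOp_le Ss Ts) h1
    rwa [vOp_idem] at h2
  exact (mem_tOp (mul_ne_bot hX hY)).mpr
    ⟨Ss * Ts, mul_ne_bot hSsb hTsb, hSsf.mul hTsf, mul_le_mul' hSsle hTsle, hx'⟩

lemma tOp_mul_tOp_left (X Y : Submodule R K) : tOp (tOp X * Y) = tOp (X * Y) := by
  rw [mul_comm, tOp_mul_tOp_right, mul_comm]

lemma Uc_mul_Uc (c d : K) :
    Submodule.span R {c} * Submodule.span R {d} = Submodule.span R {c * d} := by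
  rw [Submodule.span_mul_span, Set.singleton_mul_singleton]

lemma Uc_one : (Submodule.span R {(1 : K)}) = (1 : Submodule R K) := Submodule.one_eq_span.symm

lemma Uc_cancel {c : K} (hc : c ≠ 0) (Z : Submodule R K) :
    Submodule.span R {c} * (Submodule.span R {c⁻¹} * Z) = Z := by
  rw [← mul_assoc, Uc_mul_Uc, mul_inv_cancel₀ hc, Uc_one, one_mul]

lemma div_Uc_mul {c : K} (hc : c ≠ 0) (X : Submodule R K) :
    (1 : Submodule R K) / (Submodule.span R {c} * X) =
      Submodule.span R {c⁻¹} * ((1 : Submodule R K) / X) := by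
  ext q
  constructor
  · intro hq
    rw [Submodule.mem_div_iff_forall_mul_mem] at hq
    rw [Submodule.mem_span_singleton_mul]
    refine ⟨c * q, ?_, by field_simp⟩
    rw [Submodule.mem_div_iff_forall_mul_mem]
    intro y hy
    have h1 := hq (c * y) (Submodule.mul_mem_mul (Submodule.mem_span_singleton_self c) hy)
    have e : c * q * y = q * (c * y) := by ring
    rw [e]; exact h1
  · intro hq
    rw [Submodule.mem_span_singleton_mul] at hq
    obtain ⟨z, hz, rfl⟩ := hq
    rw [Submodule.mem_div_iff_forall_mul_mem] at hz ⊢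
    intro y hy
    rw [Submodule.mem_span_singleton_mul] at hy
    obtain ⟨w, hw, rfl⟩ := hy
    have h1 := hz w hw
    have e : c⁻¹ * z * (c * w) = z * w := by field_simp
    rw [e]; exact h1

lemma dual_Uc_mul {c : K} (hc : c ≠ 0) (X : Submodule R K) :
    dual (Submodule.span R {c} * X) = Submodule.span R {c⁻¹} * dual X :=
  div_Uc_mul hc X

lemma vOp_Uc_mul {c : K} (hc : c ≠ 0) (X : Submodule R K) :
    vOp (Submodule.span R {c} * X) = Submodule.span R {c} * vOp X := by
  unfold vOp
  rw [div_Uc_mul hc, div_Uc_mul (inv_ne_zero hc), inv_inv]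

lemma tOp_Uc_mul_le {c : K} (hc : c ≠ 0) (X : Submodule R K) :
    tOp (Submodule.span R {c} * X) ≤ Submodule.span R {c} * tOp X := by
  by_cases hX : X = ⊥
  · subst hX; simp [tOp_bot, Submodule.mul_bot]
  have hUX : Submodule.span R {c} * X ≠ ⊥ := by
    intro h
    apply hX
    have := congrArg (fun Z => Submodule.span R {c⁻¹} * Z) h
    simp only [Submodule.mul_bot] at this
    rw [← mul_assoc, Uc_mul_Uc, inv_mul_cancel₀ hc, Uc_one, one_mul] at this
    exact this
  intro x hx
  obtain ⟨J, hJb, hJf, hJle, hxv⟩ := (mem_tOp hUX).mp hx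
  set J' : Submodule R K := Submodule.span R {c⁻¹} * J with hJ'def
  have hJc : Submodule.span R {c} * J' = J := Uc_cancel hc J
  have hJ'b : J' ≠ ⊥ := by
    intro h
    apply hJb
    rw [← hJc, h, Submodule.mul_bot]
  have hJ'f : J'.FG := (Submodule.fg_span_singleton _).mul hJf
  have hJ'le : J' ≤ X := by
    rw [hJ'def]
    calc Submodule.span R {c⁻¹} * J ≤ Submodule.span R {c⁻¹} * (Submodule.span R {c} * X) :=
        mul_le_mul' le_rfl hJle
    _ = X := by rw [← mul_assoc, Uc_mul_Uc, inv_mul_cancel₀ hc, Uc_one, one_mul]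
  have hxv' : x ∈ Submodule.span R {c} * vOp J' := by
    rw [← vOp_Uc_mul hc, hJc]; exact hxv
  rw [Submodule.mem_span_singleton_mul] at hxv'
  obtain ⟨z, hz, rfl⟩ := hxv'
  rw [Submodule.mem_span_singleton_mul]
  exact ⟨z, (mem_tOp hX).mpr ⟨J', hJ'b, hJ'f, hJ'le, hz⟩, rfl⟩

lemma tOp_Uc_mul {c : K} (hc : c ≠ 0) (X : Submodule R K) :
    tOp (Submodule.span R {c} * X) = Submodule.span R {c} * tOp X := by
  refine le_antisymm (tOp_Uc_mul_le hc X) ?_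
  have h1 := tOp_Uc_mul_le (inv_ne_zero hc) (Submodule.span R {c} * X)
  rw [← mul_assoc, Uc_mul_Uc, inv_mul_cancel₀ hc, Uc_one, one_mul] at h1
  calc Submodule.span R {c} * tOp X ≤
      Submodule.span R {c} * (Submodule.span R {c⁻¹} * tOp (Submodule.span R {c} * X)) :=
        mul_le_mul' le_rfl h1
  _ = tOp (Submodule.span R {c} * X) := Uc_cancel hc _

end Basics

section Ideals

set_option linter.unusedSectionVars false

variable {R : Type*} [CommRing R] [IsDomain R]
variable {K : Type*} [Field K] [Algebra R K] [IsFractionRing R K]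

lemma mem_toK {I : Ideal R} {x : K} :
    x ∈ toK R K I ↔ ∃ i ∈ I, algebraMap R K i = x := by
  simp [toK, Submodule.mem_map, Algebra.linearMap_apply]

lemma algebraMap_mem_toK_iff {I : Ideal R} {r : R} :
    algebraMap R K r ∈ toK R K I ↔ r ∈ I := by
  rw [mem_toK]
  constructor
  · rintro ⟨i, hi, h⟩
    have : i = r := IsFractionRing.injective R K h
    exact this ▸ hi
  · intro h; exact ⟨r, h, rfl⟩

lemma toK_mono {I J : Ideal R} (h : I ≤ J) : toK R K I ≤ toK R K J := Submodule.map_mono h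

lemma toK_le_one (I : Ideal R) : toK R K I ≤ 1 := by
  intro x hx
  rw [mem_toK] at hx
  obtain ⟨i, -, rfl⟩ := hx
  rw [Submodule.mem_one]
  exact ⟨i, rfl⟩

lemma toK_bot : toK R K (⊥ : Ideal R) = ⊥ := Submodule.map_bot _

lemma toK_ne_bot {I : Ideal R} (h : I ≠ ⊥) : toK R K I ≠ ⊥ := by
  obtain ⟨i, hi, hi0⟩ := Submodule.exists_mem_ne_zero_of_ne_bot h
  intro hb
  have h1 : algebraMap R K i ∈ toK R K I := ⟨i, hi, rfl⟩
  rw [hb, Submodule.mem_bot] at h1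
  exact hi0 (IsFractionRing.injective R K (by rw [h1, map_zero]))

lemma toK_mul (I J : Ideal R) : toK R K (I * J) = toK R K I * toK R K J := by
  have h : Algebra.linearMap R K = (Algebra.ofId R K).toLinearMap := rfl
  unfold toK
  rw [h, Submodule.map_mul]

lemma toK_top : toK R K (⊤ : Ideal R) = 1 := by
  ext x
  rw [mem_toK, Submodule.mem_one]
  simp

lemma tOp_toK_le_one (I : Ideal R) : tOp (toK R K I) ≤ 1 := by
  refine (tOp_le_vOp _).trans ?_
  have := vOp_mono (toK_le_one (K := K) I)
  rwa [vOp_one] at this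

variable (K) in
def tcl (A : Ideal R) : Ideal R := Submodule.comap (Algebra.linearMap R K) (tOp (toK R K A))

lemma mem_tcl {A : Ideal R} {r : R} : r ∈ tcl K A ↔ algebraMap R K r ∈ tOp (toK R K A) :=
  Iff.rfl

lemma toK_tcl (A : Ideal R) : toK R K (tcl K A) = tOp (toK R K A) := by
  apply le_antisymm
  · intro x hx
    rw [mem_toK] at hx
    obtain ⟨i, hi, rfl⟩ := hx
    exact hi
  · intro x hx
    have hx1 : x ∈ (1 : Submodule R K) := tOp_toK_le_one A hx
    rw [Submodule.mem_one] at hx1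
    obtain ⟨r, rfl⟩ := hx1
    exact ⟨r, hx, rfl⟩

lemma le_tcl (A : Ideal R) : A ≤ tcl K A := by
  intro r hr
  exact mem_tcl.mpr (le_tOp _ ⟨r, hr, rfl⟩)

lemma tcl_isTIdeal (A : Ideal R) : IsTIdeal K (tcl K A) := by
  unfold IsTIdeal
  rw [toK_tcl]
  exact tOp_idem _

lemma tcl_eq_top_iff {A : Ideal R} : tcl K A = ⊤ ↔ tOp (toK R K A) = 1 := by
  constructor
  · intro h
    have := congrArg (toK R K) h
    rwa [toK_tcl, toK_top] at this
  · intro h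
    rw [Ideal.eq_top_iff_one, mem_tcl, h, map_one]
    exact one_mem_one

lemma isTIdeal_tcl_eq {A : Ideal R} (h : IsTIdeal K A) : tcl K A = A := by
  have h1 : toK R K (tcl K A) = toK R K A := by rw [toK_tcl]; exact h
  ext r
  constructor
  · intro hr
    have h2 : algebraMap R K r ∈ toK R K (tcl K A) := ⟨r, hr, rfl⟩
    rw [h1] at h2
    exact algebraMap_mem_toK_iff.mp h2
  · exact fun hr => le_tcl A hr

lemma exists_tmax {J : Ideal R} (hJt : IsTIdeal K J) (hJ : J ≠ ⊤) :
    ∃ M : Ideal R, IsTMaximal K M ∧ J ≤ M := by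
  set s : Set (Ideal R) := {I : Ideal R | IsTIdeal K I ∧ I ≠ ⊤} with hs
  have hzorn := zorn_le_nonempty₀ s ?_ J ⟨hJt, hJ⟩
  · obtain ⟨M, hJM, hMs, hMmax⟩ := hzorn
    refine ⟨M, ⟨hMs.2, hMs.1, ?_⟩, hJM⟩
    intro J' hJ'top hJ't hMJ'
    exact le_antisymm (hMmax ⟨hJ't, hJ'top⟩ hMJ') hMJ'
  · intro c hcs hchain y hyc
    set U : Ideal R := sSup c with hU
    have hdir : DirectedOn (· ≤ ·) c := hchain.directedOn
    have hcne : c.Nonempty := ⟨y, hyc⟩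
    have hUne : U ≠ ⊤ := by
      intro h
      have h1 : (1 : R) ∈ U := h ▸ Submodule.mem_top
      rw [hU, Submodule.mem_sSup_of_directed hcne hdir] at h1
      obtain ⟨I, hIc, hI1⟩ := h1
      exact (hcs hIc).2 (Ideal.eq_top_iff_one I |>.mpr hI1)
    have hUt : IsTIdeal K U := by
      unfold IsTIdeal
      refine le_antisymm ?_ (le_tOp _)
      by_cases hUb : toK R K U = ⊥
      · rw [hUb, tOp_bot]
      intro x hx
      obtain ⟨J₀, hJ₀b, hJ₀f, hJ₀le, hxv⟩ := (mem_tOp hUb).mp hx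
      -- J₀ is compact and toK U is a directed sup
      have himg : toK R K U = sSup ((toK R K) '' c) := by
        rw [hU]
        unfold toK
        rw [sSup_eq_iSup', Submodule.map_iSup, ← sSup_range]
        congr 1
        ext X
        constructor
        · rintro ⟨⟨I₁, hI₁⟩, rfl⟩
          exact ⟨I₁, hI₁, rfl⟩
        · rintro ⟨I₁, hI₁, rfl⟩
          exact ⟨⟨I₁, hI₁⟩, rfl⟩
      have hdir2 : DirectedOn (· ≤ ·) ((toK R K) '' c) := by
        rintro - ⟨I₁, h₁, rfl⟩ - ⟨I₂, h₂, rfl⟩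
        obtain ⟨I₃, h₃, h₁₃, h₂₃⟩ := hdir I₁ h₁ I₂ h₂
        exact ⟨toK R K I₃, ⟨I₃, h₃, rfl⟩, toK_mono h₁₃, toK_mono h₂₃⟩
      have hcomp := (Submodule.fg_iff_compact J₀).mp hJ₀f
      rw [CompleteLattice.isCompactElement_iff_le_of_directed_sSup_le] at hcomp
      obtain ⟨-, ⟨I₁, hI₁c, rfl⟩, hle₁⟩ :=
        hcomp ((toK R K) '' c) (hcne.image _) hdir2 (himg ▸ hJ₀le)
      have hx' : x ∈ toK R K I₁ := by
        have h2 : vOp J₀ ≤ tOp (toK R K I₁) := by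
          by_cases hI₁b : toK R K I₁ = ⊥
          · exact absurd (le_bot_iff.mp (hI₁b ▸ hle₁)) hJ₀b
          · intro z hz
            exact (mem_tOp hI₁b).mpr ⟨J₀, hJ₀b, hJ₀f, hle₁, hz⟩
        have h3 : tOp (toK R K I₁) = toK R K I₁ := (hcs hI₁c).1
        exact h3 ▸ h2 hxv
      exact toK_mono (le_sSup hI₁c) hx'
    exact ⟨U, ⟨hUt, hUne⟩, fun z hz => le_sSup hz⟩

lemma tcl_eq_top_of_not_le_tmax {A : Ideal R}
    (h : ∀ M : Ideal R, IsTMaximal K M → ¬ A ≤ M) : tOp (toK R K A) = 1 := by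
  by_contra hne
  have hNtop : tcl K A ≠ ⊤ := fun h1 => hne (tcl_eq_top_iff.mp h1)
  obtain ⟨M, hM, hNM⟩ := exists_tmax (tcl_isTIdeal A) hNtop
  exact h M hM ((le_tcl A).trans hNM)

lemma tmax_isPrime {M : Ideal R} (hM : IsTMaximal K M) : M.IsPrime := by
  rw [Ideal.isPrime_iff]
  refine ⟨hM.1, ?_⟩
  intro a b hab
  by_contra hcon
  push_neg at hcon
  obtain ⟨ha, hb⟩ := hcon
  have htop : ∀ x : R, x ∉ M → tOp (toK R K (M ⊔ Ideal.span {x})) = 1 := by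
    intro x hx
    set Jx : Ideal R := tcl K (M ⊔ Ideal.span {x}) with hJx
    by_cases hJxtop : Jx = ⊤
    · exact tcl_eq_top_iff.mp hJxtop
    · exfalso
      have hMJx : M ≤ Jx := le_trans le_sup_left (le_tcl _)
      have := hM.2.2 Jx hJxtop (tcl_isTIdeal _) hMJx
      apply hx
      rw [← this]
      exact le_tcl _ (le_sup_right (a := M) (Ideal.subset_span rfl))
  set Ia : Ideal R := M ⊔ Ideal.span {a} with hIa
  set Ib : Ideal R := M ⊔ Ideal.span {b} with hIb
  have hprod : Ia * Ib ≤ M := by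
    rw [Ideal.mul_le]
    intro x hx y hy
    rw [hIa, Submodule.mem_sup] at hx
    rw [hIb, Submodule.mem_sup] at hy
    obtain ⟨m₁, hm₁, v₁, hv₁, rfl⟩ := hx
    obtain ⟨m₂, hm₂, v₂, hv₂, rfl⟩ := hy
    rw [Ideal.mem_span_singleton'] at hv₁ hv₂
    obtain ⟨r, rfl⟩ := hv₁
    obtain ⟨t, rfl⟩ := hv₂
    have e : (m₁ + r * a) * (m₂ + t * b) =
        m₁ * (m₂ + t * b) + (r * a) * m₂ + (r * t) * (a * b) := by ring
    rw [e]
    exact add_mem (add_mem (Ideal.mul_mem_right _ _ hm₁)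
      (Ideal.mul_mem_left _ _ hm₂))
      (Ideal.mul_mem_left _ _ hab)
  have hone : tOp (toK R K (Ia * Ib)) = 1 := by
    rw [toK_mul, ← tOp_mul_tOp_right, htop b hb, mul_one, htop a ha]
  have h1M : (1 : R) ∈ M := by
    have h2 : tOp (toK R K (Ia * Ib)) ≤ tOp (toK R K M) := tOp_mono (toK_mono hprod)
    rw [hone, hM.2.1] at h2
    exact algebraMap_mem_toK_iff.mp (h2 (by rw [map_one]; exact one_mem_one))
  exact hM.1 (Ideal.eq_top_iff_one M |>.mpr h1M)

end Ideals

section Local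

set_option linter.unusedSectionVars false

variable {R : Type*} [CommRing R] [IsDomain R]
variable {K : Type*} [Field K] [Algebra R K] [IsFractionRing R K]

variable (K) in
/-- The saturation `X R_M = {x ∈ K : s x ∈ X for some s ∉ M}`. -/
def lS (M : Ideal R) (X : Submodule R K) : Set K :=
  {x | ∃ s : R, s ∉ M ∧ x * algebraMap R K s ∈ X}

lemma lS_mono {M : Ideal R} {X Y : Submodule R K} (h : X ≤ Y) : lS K M X ⊆ lS K M Y := by
  rintro x ⟨s, hs, hxs⟩
  exact ⟨s, hs, h hxs⟩

lemma subset_lS {M : Ideal R} (hM : M ≠ ⊤) (X : Submodule R K) : (X : Set K) ⊆ lS K M X := by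
  intro x hx
  refine ⟨1, fun h => hM (Ideal.eq_top_iff_one M |>.mpr h), ?_⟩
  rw [map_one, mul_one]
  exact hx

lemma lS_add {M : Ideal R} (hM : M.IsPrime) {X : Submodule R K} {x y : K}
    (hx : x ∈ lS K M X) (hy : y ∈ lS K M X) : x + y ∈ lS K M X := by
  obtain ⟨s, hs, hxs⟩ := hx
  obtain ⟨t, ht, hyt⟩ := hy
  refine ⟨s * t, fun h => ((hM.mem_or_mem h).elim hs ht), ?_⟩
  have e : (x + y) * algebraMap R K (s * t) =
      t • (x * algebraMap R K s) + s • (y * algebraMap R K t) := by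
    rw [map_mul]
    simp only [Algebra.smul_def]
    ring
  rw [e]
  exact add_mem (Submodule.smul_mem _ _ hxs) (Submodule.smul_mem _ _ hyt)

lemma lS_zero_mem {M : Ideal R} (hM : M ≠ ⊤) (X : Submodule R K) : (0 : K) ∈ lS K M X :=
  subset_lS hM X (Submodule.zero_mem X)

lemma lS_mul {M : Ideal R} (hM : M.IsPrime) {X Y : Submodule R K} {x y : K}
    (hx : x ∈ lS K M X) (hy : y ∈ lS K M Y) : x * y ∈ lS K M (X * Y) := by
  obtain ⟨s, hs, hxs⟩ := hx
  obtain ⟨t, ht, hyt⟩ := hy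
  refine ⟨s * t, fun h => ((hM.mem_or_mem h).elim hs ht), ?_⟩
  have e : x * y * algebraMap R K (s * t) =
      (x * algebraMap R K s) * (y * algebraMap R K t) := by
    rw [map_mul]; ring
  rw [e]
  exact Submodule.mul_mem_mul hxs hyt

lemma lS_absorb {M : Ideal R} (hM : M.IsPrime) {X : Submodule R K} {x v : K}
    (hx : x ∈ lS K M X) (hv : v ∈ lS K M (1 : Submodule R K)) : x * v ∈ lS K M X := by
  have h1 := lS_mul hM hx hv
  rwa [mul_one] at h1

lemma one_mem_lS_iff {M : Ideal R} {I : Ideal R} :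
    (1 : K) ∈ lS K M (toK R K I) ↔ ¬ I ≤ M := by
  constructor
  · rintro ⟨s, hs, hxs⟩
    rw [one_mul, algebraMap_mem_toK_iff] at hxs
    exact fun h => hs (h hxs)
  · intro h
    rw [SetLike.not_le_iff_exists] at h
    obtain ⟨s, hsI, hsM⟩ := h
    exact ⟨s, hsM, by rw [one_mul]; exact algebraMap_mem_toK_iff.mpr hsI⟩

lemma algebraMap_mem_lS_toK {M P : Ideal R} (hP : P.IsPrime) (hPM : P ≤ M) {r : R}
    (h : algebraMap R K r ∈ lS K M (toK R K P)) : r ∈ P := by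
  obtain ⟨s, hs, hxs⟩ := h
  rw [← map_mul, algebraMap_mem_toK_iff] at hxs
  exact (hP.mem_or_mem hxs).resolve_right (fun hsP => hs (hPM hsP))

lemma algebraMap_mem_lS {M : Ideal R} (hM : M ≠ ⊤) (X : Submodule R K) {x : K}
    (hx : x ∈ X) : x ∈ lS K M X := subset_lS hM X hx

lemma w_le_t {X : Submodule R K} {x : K}
    (h : ∀ M : Ideal R, IsTMaximal K M → x ∈ lS K M X) : x ∈ tOp X := by
  by_cases hx0 : x = 0
  · subst hx0; exact Submodule.zero_mem _
  set J : Ideal R :=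
    { carrier := {r : R | x * algebraMap R K r ∈ X}
      add_mem' := by
        intro a b ha hb
        simp only [Set.mem_setOf_eq] at *
        rw [map_add, mul_add]
        exact add_mem ha hb
      zero_mem' := by
        simp only [Set.mem_setOf_eq, map_zero, mul_zero]
        exact Submodule.zero_mem X
      smul_mem' := by
        intro c r hr
        simp only [Set.mem_setOf_eq] at *
        rw [smul_eq_mul, map_mul]
        have e : x * (algebraMap R K c * algebraMap R K r) = c • (x * algebraMap R K r) := by
          rw [Algebra.smul_def]; ring
        rw [e]
        exact Submodule.smul_mem _ _ hr } with hJdef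
  have hnle : ∀ M : Ideal R, IsTMaximal K M → ¬ J ≤ M := by
    intro M hM hle
    obtain ⟨s, hs, hxs⟩ := h M hM
    exact hs (hle hxs)
  have htop : tOp (toK R K J) = 1 := tcl_eq_top_of_not_le_tmax hnle
  have h1 : (1 : K) ∈ tOp (toK R K J) := htop ▸ one_mem_one
  have hJb : toK R K J ≠ ⊥ := by
    intro hb
    rw [hb, tOp_bot] at htop
    have : (1 : K) ∈ (⊥ : Submodule R K) := htop ▸ one_mem_one
    simp at this
  obtain ⟨J₀, hb, hf, hle, h1v⟩ := (mem_tOp hJb).mp h1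
  set J' : Submodule R K := Submodule.span R {x} * J₀ with hJ'def
  have hJ'f : J'.FG := (Submodule.fg_span_singleton _).mul hf
  have hJ'b : J' ≠ ⊥ :=
    mul_ne_bot (by simpa [Submodule.span_singleton_eq_bot] using hx0) hb
  have hJ'le : J' ≤ X := by
    rw [hJ'def, Submodule.mul_le]
    intro u hu j hj
    rw [Submodule.mem_span_singleton] at hu
    obtain ⟨c, rfl⟩ := hu
    have hj' := hle hj
    rw [mem_toK] at hj'
    obtain ⟨r, hr, rfl⟩ := hj'
    have e : (c • x) * algebraMap R K r = c • (x * algebraMap R K r) := by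
      rw [smul_mul_assoc]
    rw [e]
    exact Submodule.smul_mem _ _ hr
  have hxv : x ∈ vOp J' := by
    apply mul_vOp_le (Submodule.span R {x}) J₀
    have := Submodule.mul_mem_mul (Submodule.mem_span_singleton_self x) h1v
    rwa [mul_one] at this
  have hXb : X ≠ ⊥ := fun hb => hJ'b (le_bot_iff.mp (hb ▸ hJ'le))
  exact (mem_tOp hXb).mpr ⟨J', hJ'b, hJ'f, hJ'le, hxv⟩

lemma not_mem_tOp {X : Submodule R K} {x : K} (h : x ∉ tOp X) :
    ∃ M : Ideal R, IsTMaximal K M ∧ x ∉ lS K M X := by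
  by_contra hcon
  push_neg at hcon
  exact h (w_le_t (fun M hM => (hcon M hM)))

lemma val_total (hR : IsPVMD R K) {M : Ideal R} (hM : IsTMaximal K M) (x y : K) :
    (∃ v ∈ lS K M (1 : Submodule R K), x = y * v) ∨
      (∃ v ∈ lS K M (1 : Submodule R K), y = x * v) := by
  have hMtop : M ≠ ⊤ := hM.1
  by_cases hy0 : y = 0
  · right
    exact ⟨0, lS_zero_mem hMtop _, by rw [hy0, mul_zero]⟩
  by_cases hx0 : x = 0
  · left
    exact ⟨0, lS_zero_mem hMtop _, by rw [hx0, mul_zero]⟩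
  obtain ⟨a, b, hbnzd, hab⟩ := IsFractionRing.div_surjective (A := R) (x / y)
  have hb0 : b ≠ 0 := nonZeroDivisors.ne_zero hbnzd
  have hfb0 : algebraMap R K b ≠ 0 := by
    rw [map_ne_zero_iff _ (IsFractionRing.injective R K)]; exact hb0
  have ha0 : a ≠ 0 := by
    intro h
    rw [h, map_zero, zero_div] at hab
    exact hx0 (by field_simp at hab; simpa using hab.symm)
  have hfa0 : algebraMap R K a ≠ 0 := by
    rw [map_ne_zero_iff _ (IsFractionRing.injective R K)]; exact ha0
  set J : Ideal R := Ideal.span {a, b} with hJdef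
  have hJb : J ≠ ⊥ := by
    intro h
    apply hb0
    have : b ∈ J := Ideal.subset_span (by simp)
    rw [h] at this
    simpa using this
  have hJf : J.FG := ⟨{a, b}, by simp [hJdef]⟩
  have hinv := hR J hJb hJf
  have hprodle : toK R K J * dual (toK R K J) ≤ 1 := by
    rw [Submodule.mul_le]
    intro m hm q hq
    rw [mem_dual] at hq
    rw [mul_comm]
    exact hq m hm
  have hnotle : ¬ toK R K J * dual (toK R K J) ≤ toK R K M := by
    intro hle
    have h2 : tOp (toK R K J * dual (toK R K J)) ≤ tOp (toK R K M) := tOp_mono hle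
    rw [hinv, hM.2.1] at h2
    exact hM.1 (Ideal.eq_top_iff_one M |>.mpr
      (algebraMap_mem_toK_iff.mp (h2 (by rw [map_one]; exact one_mem_one))))
  obtain ⟨ξ, hξ, hξM⟩ := SetLike.not_le_iff_exists.mp hnotle
  obtain ⟨s, rfl⟩ := Submodule.mem_one.mp (hprodle hξ)
  have hsM : s ∉ M := fun h => hξM (algebraMap_mem_toK_iff.mpr h)
  have hdecomp : ∃ q' ∈ dual (toK R K J), ∃ q'' ∈ dual (toK R K J),
      algebraMap R K s = algebraMap R K a * q' + algebraMap R K b * q'' := by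
    clear hξM hsM
    refine Submodule.mul_induction_on hξ ?_ ?_
    · intro m hm q hq
      rw [mem_toK] at hm
      obtain ⟨j₀, hj₀, rfl⟩ := hm
      rw [hJdef, Ideal.mem_span_pair] at hj₀
      obtain ⟨α, β, hαβ⟩ := hj₀
      refine ⟨α • q, Submodule.smul_mem _ _ hq, β • q, Submodule.smul_mem _ _ hq, ?_⟩
      rw [← hαβ, map_add, map_mul, map_mul]
      simp only [Algebra.smul_def]
      ring
    · rintro ξ₁ ξ₂ ⟨q₁, hq₁, q₁', hq₁', h₁⟩ ⟨q₂, hq₂, q₂', hq₂', h₂⟩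
      refine ⟨q₁ + q₂, add_mem hq₁ hq₂, q₁' + q₂', add_mem hq₁' hq₂', ?_⟩
      rw [h₁, h₂]
      ring
  obtain ⟨q', hq', q'', hq'', hsum⟩ := hdecomp
  have hamem : algebraMap R K a ∈ toK R K J := ⟨a, Ideal.subset_span (by simp), rfl⟩
  have hbmem : algebraMap R K b ∈ toK R K J := ⟨b, Ideal.subset_span (by simp), rfl⟩
  obtain ⟨c₁, hc₁⟩ := Submodule.mem_one.mp (mem_dual.mp hq' _ hamem)
  obtain ⟨c₂, hc₂⟩ := Submodule.mem_one.mp (mem_dual.mp hq' _ hbmem)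
  obtain ⟨c₃, hc₃⟩ := Submodule.mem_one.mp (mem_dual.mp hq'' _ hamem)
  obtain ⟨c₄, hc₄⟩ := Submodule.mem_one.mp (mem_dual.mp hq'' _ hbmem)
  have hs14 : s = c₁ + c₄ := by
    apply IsFractionRing.injective R K
    rw [map_add, hc₁, hc₄, hsum]
    ring
  have hz : x = y * (algebraMap R K a / algebraMap R K b) := by
    rw [hab, mul_div_assoc', mul_comm, mul_div_assoc, div_self hy0, mul_one]
  by_cases hc₄M : c₄ ∉ M
  · left
    refine ⟨algebraMap R K a / algebraMap R K b, ⟨c₄, hc₄M, ?_⟩, hz⟩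
    have e : algebraMap R K a / algebraMap R K b * algebraMap R K c₄ =
        q'' * algebraMap R K a := by
      rw [hc₄]
      field_simp
    rw [e, ← hc₃]
    exact Submodule.mem_one.mpr ⟨c₃, rfl⟩
  · right
    push_neg at hc₄M
    have hc₁M : c₁ ∉ M := by
      intro h
      exact hsM (hs14 ▸ add_mem h hc₄M)
    refine ⟨algebraMap R K b / algebraMap R K a, ⟨c₁, hc₁M, ?_⟩, ?_⟩
    · have e : algebraMap R K b / algebraMap R K a * algebraMap R K c₁ =
          q' * algebraMap R K b := by
        rw [hc₁]
        field_simp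
      rw [e, ← hc₂]
      exact Submodule.mem_one.mpr ⟨c₂, rfl⟩
    · rw [hz]
      field_simp

lemma lS_rep_mul (hR : IsPVMD R K) {M : Ideal R} (hM : IsTMaximal K M)
    (X Y : Submodule R K) {ξ : K} (hξ : ξ ∈ X * Y) :
    ∃ η ∈ X, ∃ ζ ∈ Y, ∃ v ∈ lS K M (1 : Submodule R K), ξ = η * ζ * v := by
  refine Submodule.mul_induction_on hξ ?_ ?_
  · intro m hm n hn
    exact ⟨m, hm, n, hn, 1, algebraMap_mem_lS hM.1 _ one_mem_one, by rw [mul_one]⟩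
  · rintro ξ₁ ξ₂ ⟨η₁, hη₁, ζ₁, hζ₁, v₁, hv₁, h₁⟩ ⟨η₂, hη₂, ζ₂, hζ₂, v₂, hv₂, h₂⟩
    rcases val_total hR hM (η₁ * ζ₁) (η₂ * ζ₂) with ⟨w, hw, hcomp⟩ | ⟨w, hw, hcomp⟩
    · refine ⟨η₂, hη₂, ζ₂, hζ₂, w * v₁ + v₂, lS_add (tmax_isPrime hM)
        (lS_absorb (tmax_isPrime hM) hw hv₁) hv₂, ?_⟩
      rw [h₁, h₂, hcomp]
      ring
    · refine ⟨η₁, hη₁, ζ₁, hζ₁, v₁ + w * v₂, lS_add (tmax_isPrime hM) hv₁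
        (lS_absorb (tmax_isPrime hM) hw hv₂), ?_⟩
      rw [h₁, h₂, hcomp]
      ring

end Local



section MainLemmas

set_option linter.unusedSectionVars false
set_option maxHeartbeats 1000000

variable {R : Type*} [CommRing R] [IsDomain R]
variable {K : Type*} [Field K] [Algebra R K] [IsFractionRing R K]

lemma mem_nagata {P : Ideal R} {x : K} :
    x ∈ nagata K P ↔ ∃ n : ℕ, ∀ y ∈ P ^ (n + 1),
      ∃ r : R, x * algebraMap R K y = algebraMap R K r := Iff.rfl

lemma mem_kaplansky {P : Ideal R} {x : K} :
    x ∈ kaplansky K P ↔ ∀ a ∈ P, ∃ n : ℕ, 0 < n ∧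
      ∃ r : R, x * (algebraMap R K a) ^ n = algebraMap R K r := Iff.rfl

lemma nagata_subset_kaplansky (P : Ideal R) :
    (nagata K P : Set K) ⊆ (kaplansky K P : Set K) := by
  intro x hx
  rw [SetLike.mem_coe, mem_nagata] at hx
  rw [SetLike.mem_coe, mem_kaplansky]
  obtain ⟨n, hn⟩ := hx
  intro a ha
  obtain ⟨r, hr⟩ := hn (a ^ (n + 1)) (Ideal.pow_mem_pow ha (n + 1))
  exact ⟨n + 1, Nat.succ_pos n, r, by rw [← hr, map_pow]⟩

lemma mul_dual_le_one (X : Submodule R K) : X * dual X ≤ 1 := by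
  rw [Submodule.mul_le]
  intro m hm q hq
  rw [mul_comm]
  exact mem_dual.mp hq m hm

lemma statement_19_mpr (P : Ideal R) (hP : P.IsPrime) (htP : IsTIdeal K P)
    (h1 : toK R K P = tOp (toK R K (P * P)))
    (I : Ideal R) (hti : IsTInvertible K I) (hrad : I.radical = P) :
    (nagata K P : Set K) ⊂ (kaplansky K P : Set K) := by
  rw [Set.ssubset_iff_of_subset (nagata_subset_kaplansky P)]
  have hIP : I ≤ P := hrad ▸ Ideal.le_radical
  have hItop : I ≠ ⊤ := by
    intro h
    exact hP.ne_top (Ideal.eq_top_iff_one P |>.mpr (hIP (h ▸ Submodule.mem_top)))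
  have hdual_le : dual (toK R K P) ≤ dual (toK R K I) := dual_anti (toK_mono hIP)
  have hne : dual (toK R K I) ≠ dual (toK R K P) := by
    intro heq
    have hPinv : tOp (toK R K P * dual (toK R K P)) = 1 := by
      apply le_antisymm
      · have h2 := tOp_mono (mul_dual_le_one (toK R K P))
        rwa [tOp_one] at h2
      · rw [← hti, ← heq]
        exact tOp_mono (mul_le_mul' (toK_mono hIP) le_rfl)
    have hPone : toK R K P = 1 := by
      calc toK R K P = tOp (toK R K P) := htP.symm
        _ = tOp (toK R K P * 1) := by rw [mul_one]
        _ = tOp (toK R K P * tOp (toK R K P * dual (toK R K P))) := by rw [hPinv]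
        _ = tOp (toK R K P * (toK R K P * dual (toK R K P))) := tOp_mul_tOp_right _ _
        _ = tOp ((toK R K P * toK R K P) * dual (toK R K P)) := by rw [mul_assoc]
        _ = tOp (tOp (toK R K P * toK R K P) * dual (toK R K P)) := (tOp_mul_tOp_left _ _).symm
        _ = tOp (toK R K P * dual (toK R K P)) := by rw [← toK_mul, ← h1]
        _ = 1 := hPinv
    exact hP.ne_top (Ideal.eq_top_iff_one P |>.mpr (algebraMap_mem_toK_iff.mp
      (by rw [hPone, map_one]; exact one_mem_one)))
  have hlt : dual (toK R K P) < dual (toK R K I) :=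
    lt_of_le_of_ne hdual_le (fun h => hne h.symm)
  obtain ⟨u, huI, huP⟩ := SetLike.exists_of_lt hlt
  refine ⟨u, ?_, ?_⟩
  · rw [SetLike.mem_coe, mem_kaplansky]
    intro a ha
    have haI : a ∈ I.radical := hrad.symm ▸ ha
    obtain ⟨n, hn⟩ := Ideal.mem_radical_iff.mp haI
    have hn0 : n ≠ 0 := by
      intro h
      rw [h, pow_zero] at hn
      exact hItop (Ideal.eq_top_iff_one I |>.mpr hn)
    have h2 : u * (algebraMap R K a) ^ n ∈ (1 : Submodule R K) := by
      rw [← map_pow]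
      exact mem_dual.mp huI _ (algebraMap_mem_toK_iff.mpr hn)
    obtain ⟨r, hr⟩ := Submodule.mem_one.mp h2
    exact ⟨n, Nat.pos_of_ne_zero hn0, r, hr.symm⟩
  · intro hu
    rw [SetLike.mem_coe, mem_nagata] at hu
    obtain ⟨n, hn⟩ := hu
    have hdualpow : u ∈ dual (toK R K (P ^ (n + 1))) := by
      rw [mem_dual]
      intro y hy
      rw [mem_toK] at hy
      obtain ⟨p, hp, rfl⟩ := hy
      obtain ⟨r, hr⟩ := hn p hp
      rw [hr]
      exact Submodule.mem_one.mpr ⟨r, rfl⟩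
    have hpow : ∀ m : ℕ, tOp (toK R K (P ^ (m + 1))) = toK R K P := by
      intro m
      induction m with
      | zero => rw [pow_one]; exact htP
      | succ l ih =>
        calc tOp (toK R K (P ^ (l + 1 + 1)))
            = tOp (toK R K (P ^ (l + 1)) * toK R K P) := by rw [pow_succ, toK_mul]
          _ = tOp (tOp (toK R K (P ^ (l + 1))) * toK R K P) := (tOp_mul_tOp_left _ _).symm
          _ = tOp (toK R K P * toK R K P) := by rw [ih]
          _ = tOp (toK R K (P * P)) := by rw [toK_mul]
          _ = toK R K P := by rw [← h1]
    apply huP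
    have hde : dual (toK R K (P ^ (n + 1))) = dual (toK R K P) := by
      rw [← dual_tOp (toK R K (P ^ (n+1))), hpow n]
    rwa [hde] at hdualpow

end MainLemmas

section MainLemmas2

set_option linter.unusedSectionVars false
set_option maxHeartbeats 1000000

variable {R : Type*} [CommRing R] [IsDomain R]
variable {K : Type*} [Field K] [Algebra R K] [IsFractionRing R K]

variable (R K) in
/-- The conductor ideal `(R :_R u)`. -/
def condIdeal (u : K) : Ideal R where
  carrier := {r : R | ∃ r' : R, u * algebraMap R K r = algebraMap R K r'}
  add_mem' := by
    rintro a b ⟨a', ha⟩ ⟨b', hb⟩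
    exact ⟨a' + b', by rw [map_add, map_add, mul_add, ha, hb]⟩
  zero_mem' := ⟨0, by simp⟩
  smul_mem' := by
    rintro c r ⟨r', hr⟩
    refine ⟨c * r', ?_⟩
    rw [smul_eq_mul, map_mul, map_mul, ← hr]
    ring

lemma mem_condIdeal {u : K} {r : R} :
    r ∈ condIdeal R K u ↔ ∃ r' : R, u * algebraMap R K r = algebraMap R K r' := Iff.rfl

lemma condIdeal_tIdeal (u : K) :
    tOp (toK R K (condIdeal R K u)) = toK R K (condIdeal R K u) := by
  refine le_antisymm ((tOp_le_vOp _).trans ?_) (le_tOp _)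
  intro x hx
  have h1 : (1 : K) ∈ (1 : Submodule R K) / toK R K (condIdeal R K u) := by
    rw [Submodule.mem_div_iff_forall_mul_mem]
    intro y hy
    rw [one_mul]
    exact toK_le_one _ hy
  have hu : u ∈ (1 : Submodule R K) / toK R K (condIdeal R K u) := by
    rw [Submodule.mem_div_iff_forall_mul_mem]
    intro y hy
    obtain ⟨r, hr, rfl⟩ := mem_toK.mp hy
    obtain ⟨r', hr'⟩ := hr
    rw [hr']
    exact Submodule.mem_one.mpr ⟨r', rfl⟩
  rw [vOp, Submodule.mem_div_iff_forall_mul_mem] at hx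
  have hx1 := hx 1 h1
  rw [mul_one] at hx1
  obtain ⟨c, rfl⟩ := Submodule.mem_one.mp hx1
  have hxu := hx u hu
  obtain ⟨c', hc'⟩ := Submodule.mem_one.mp hxu
  exact ⟨c, ⟨c', by rw [hc']; ring⟩, rfl⟩

lemma lS_one_pow {M : Ideal R} (hM : M.IsPrime) {w : K}
    (hw : w ∈ lS K M (1 : Submodule R K)) (n : ℕ) :
    w ^ n ∈ lS K M (1 : Submodule R K) := by
  induction n with
  | zero =>
    rw [pow_zero]
    exact subset_lS hM.ne_top _ one_mem_one
  | succ m ih =>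
    rw [pow_succ]
    exact lS_absorb hM ih hw

lemma exists_prime_over_lS (hR : IsPVMD R K) {M : Ideal R} (hM : IsTMaximal K M)
    {B : Ideal R} (hBM : B ≤ M) :
    ∃ Q : Ideal R, Q.IsPrime ∧ B ≤ Q ∧
      ∀ r : R, r ∈ Q → ∃ k : ℕ, k ≠ 0 ∧ algebraMap R K (r ^ k) ∈ lS K M (toK R K B) := by
  have hMp := tmax_isPrime hM
  set BM : Ideal R :=
    { carrier := {r : R | algebraMap R K r ∈ lS K M (toK R K B)}
      add_mem' := by
        intro a b ha hb
        simp only [Set.mem_setOf_eq, map_add] at *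
        exact lS_add hMp ha hb
      zero_mem' := by
        simp only [Set.mem_setOf_eq, map_zero]
        exact lS_zero_mem hM.1 _
      smul_mem' := by
        intro c r hr
        simp only [Set.mem_setOf_eq] at *
        obtain ⟨s, hs, hrs⟩ := hr
        refine ⟨s, hs, ?_⟩
        rw [smul_eq_mul, map_mul]
        have e : algebraMap R K c * algebraMap R K r * algebraMap R K s =
            c • (algebraMap R K r * algebraMap R K s) := by rw [Algebra.smul_def]; ring
        rw [e]
        exact Submodule.smul_mem _ _ hrs } with hBMdef
  have hBMmem : ∀ r : R, r ∈ BM ↔ algebraMap R K r ∈ lS K M (toK R K B) := fun r => Iff.rfl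
  have hBM1 : (1 : R) ∉ BM := by
    intro h
    rw [hBMmem, map_one] at h
    exact (one_mem_lS_iff.mp h) hBM
  have hBMtop : BM ≠ ⊤ := fun h => hBM1 (h ▸ Submodule.mem_top)
  refine ⟨BM.radical, ⟨?_, ?_⟩, ?_, ?_⟩
  · rw [Ne, Ideal.radical_eq_top]
    exact hBMtop
  · intro r r' hrr'
    obtain ⟨n, hn⟩ := Ideal.mem_radical_iff.mp hrr'
    by_cases hn0 : n = 0
    · rw [hn0, pow_zero] at hn
      exact absurd hn hBM1
    have hnmem : algebraMap R K ((r * r') ^ n) ∈ lS K M (toK R K B) := hn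
    rcases val_total hR hM (algebraMap R K r) (algebraMap R K r')
      with ⟨w, hw, hcomp⟩ | ⟨w, hw, hcomp⟩
    · left
      rw [Ideal.mem_radical_iff]
      refine ⟨2 * n, ?_⟩
      rw [hBMmem]
      have e : algebraMap R K (r ^ (2 * n)) = algebraMap R K ((r * r') ^ n) * w ^ n := by
        rw [map_pow, map_pow, map_mul, hcomp]
        ring
      rw [e]
      exact lS_absorb hMp hnmem (lS_one_pow hMp hw n)
    · right
      rw [Ideal.mem_radical_iff]
      refine ⟨2 * n, ?_⟩
      rw [hBMmem]
      have e : algebraMap R K (r' ^ (2 * n)) = algebraMap R K ((r * r') ^ n) * w ^ n := by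
        rw [map_pow, map_pow, map_mul, hcomp]
        ring
      rw [e]
      exact lS_absorb hMp hnmem (lS_one_pow hMp hw n)
  · intro b hb
    exact Ideal.le_radical ((hBMmem b).mpr (subset_lS hM.1 _ ⟨b, hb, rfl⟩))
  · intro r hr
    obtain ⟨k, hk⟩ := Ideal.mem_radical_iff.mp hr
    by_cases hk0 : k = 0
    · rw [hk0, pow_zero] at hk
      exact absurd hk hBM1
    · exact ⟨k, hk0, hk⟩

lemma toK_span_singleton (c : R) :
    toK R K (Ideal.span {c}) = Submodule.span R {algebraMap R K c} := by
  unfold toK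
  rw [Ideal.span, Submodule.map_span]
  simp

end MainLemmas2

section MainLemmas3

set_option linter.unusedSectionVars false
set_option maxHeartbeats 1000000

variable {R : Type*} [CommRing R] [IsDomain R]
variable {K : Type*} [Field K] [Algebra R K] [IsFractionRing R K]

lemma radical_condIdeal (hR : IsPVMD R K) (P : Ideal R) (hP : P.IsPrime)
    {u : K} (huΩ : u ∈ kaplansky K P) (huT : u ∉ nagata K P) :
    (condIdeal R K u).radical = P := by
  set B := condIdeal R K u with hBdef
  have hBt : tOp (toK R K B) = toK R K B := condIdeal_tIdeal u
  have hPrad : P ≤ B.radical := by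
    intro a ha
    obtain ⟨n, hn0, r, hr⟩ := (mem_kaplansky.mp huΩ) a ha
    refine Ideal.mem_radical_iff.mpr ⟨n, ?_⟩
    rw [hBdef]
    exact mem_condIdeal.mpr ⟨r, by rw [map_pow]; exact hr⟩
  have hnpow : ∀ n : ℕ, ¬ P ^ (n + 1) ≤ B := by
    intro n h
    apply huT
    rw [mem_nagata]
    exact ⟨n, fun y hy => (h hy : y ∈ B)⟩
  by_cases hmin : ∃ Q ∈ B.minimalPrimes, Q = P
  · obtain ⟨Q₀, hQ₀, hQP⟩ := hmin
    subst hQP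
    exact le_antisymm ((hQ₀.1.1.radical_le_iff).mpr hQ₀.1.2) hPrad
  · exfalso
    push_neg at hmin
    apply hnpow 0
    rw [pow_one]
    intro p hp
    have hptB : algebraMap R K p ∈ tOp (toK R K B) := by
      apply w_le_t
      intro M hM
      by_cases hBM : B ≤ M
      · obtain ⟨Q, hQp, hBQ, hQpow⟩ := exists_prime_over_lS hR hM hBM
        haveI := hQp
        obtain ⟨Q₀, hQ₀min, hQ₀Q⟩ := Ideal.exists_minimalPrimes_le hBQ
        have hPQ₀ : P ≤ Q₀ := le_trans hPrad ((hQ₀min.1.1.radical_le_iff).mpr hQ₀min.1.2)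
        have hPMle : P ≤ M := le_trans hPrad ((tmax_isPrime hM).radical_le_iff.mpr hBM)
        have hlt : P < Q₀ := lt_of_le_of_ne hPQ₀ (fun h => hmin Q₀ hQ₀min h.symm)
        obtain ⟨t, htQ₀, htP⟩ := SetLike.exists_of_lt hlt
        obtain ⟨k, hk0, htk⟩ := hQpow t (hQ₀Q htQ₀)
        rcases val_total hR hM (algebraMap R K (t ^ k)) (algebraMap R K p)
          with ⟨v, hv, hcomp⟩ | ⟨v, hv, hcomp⟩
        · exfalso
          apply htP
          have h6 : algebraMap R K (t ^ k) ∈ lS K M (toK R K P) := by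
            rw [hcomp]
            exact lS_absorb (tmax_isPrime hM)
              (subset_lS hM.1 _ (mem_toK.mpr ⟨p, hp, rfl⟩)) hv
          exact hP.mem_of_pow_mem k (algebraMap_mem_lS_toK hP hPMle h6)
        · rw [hcomp]
          exact lS_absorb (tmax_isPrime hM) htk hv
      · rw [SetLike.not_le_iff_exists] at hBM
        obtain ⟨s, hsB, hsM⟩ := hBM
        exact ⟨s, hsM, mem_toK.mpr ⟨p * s, Ideal.mul_mem_left _ _ hsB, by rw [map_mul]⟩⟩
    rw [hBt] at hptB
    exact algebraMap_mem_toK_iff.mp hptB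

lemma condIdeal_tInvertible (hR : IsPVMD R K) {u : K} (hu0 : u ≠ 0) :
    IsTInvertible K (condIdeal R K u) := by
  obtain ⟨a, s₀, hs₀nzd, hrep⟩ := IsFractionRing.div_surjective (A := R) u
  have hs₀ : s₀ ≠ 0 := nonZeroDivisors.ne_zero hs₀nzd
  have hfs₀ : algebraMap R K s₀ ≠ 0 := by
    rw [map_ne_zero_iff _ (IsFractionRing.injective R K)]; exact hs₀
  have ha : a ≠ 0 := by
    intro h
    apply hu0
    rw [← hrep, h, map_zero, zero_div]
  have hfa : algebraMap R K a ≠ 0 := by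
    rw [map_ne_zero_iff _ (IsFractionRing.injective R K)]; exact ha
  set D : Ideal R := Ideal.span {a} ⊓ Ideal.span {s₀} with hDdef
  set S : Ideal R := Ideal.span {a, s₀} with hSdef
  set π : K := algebraMap R K (a * s₀) with hπdef
  have hπ0 : π ≠ 0 := by
    rw [hπdef, map_ne_zero_iff _ (IsFractionRing.injective R K)]
    exact mul_ne_zero ha hs₀
  have hBmem : ∀ r : R, r ∈ condIdeal R K u ↔ a * r ∈ Ideal.span {s₀} := by
    intro r
    rw [mem_condIdeal]
    constructor
    · rintro ⟨r', hr'⟩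
      rw [Ideal.mem_span_singleton']
      refine ⟨r', IsFractionRing.injective R K ?_⟩
      rw [map_mul, map_mul, ← hr', ← hrep]
      field_simp
    · intro h
      rw [Ideal.mem_span_singleton'] at h
      obtain ⟨c, hc⟩ := h
      refine ⟨c, ?_⟩
      rw [← hrep, div_mul_eq_mul_div, div_eq_iff hfs₀, ← map_mul, ← map_mul]
      exact (congrArg (algebraMap R K) hc).symm
  have hBrep : toK R K (condIdeal R K u) =
      Submodule.span R {(algebraMap R K a)⁻¹} * toK R K D := by
    ext ξ
    rw [Submodule.mem_span_singleton_mul]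
    constructor
    · intro hξ
      obtain ⟨r, hr, rfl⟩ := mem_toK.mp hξ
      refine ⟨algebraMap R K (a * r), ⟨a * r, ?_, rfl⟩, ?_⟩
      · show a * r ∈ D
        rw [hDdef, Ideal.mem_inf]
        exact ⟨Ideal.mem_span_singleton'.mpr ⟨r, mul_comm r a⟩, (hBmem r).mp hr⟩
      · rw [map_mul]
        field_simp
    · rintro ⟨ζ, hζ, rfl⟩
      obtain ⟨d, hd, rfl⟩ := mem_toK.mp hζ
      rw [hDdef, Ideal.mem_inf] at hd
      obtain ⟨hd1, hd2⟩ := hd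
      rw [Ideal.mem_span_singleton'] at hd1
      obtain ⟨r, hr⟩ := hd1
      have hξ : (algebraMap R K a)⁻¹ * algebraMap R K d = algebraMap R K r := by
        rw [← hr, map_mul]
        field_simp
      rw [hξ]
      refine mem_toK.mpr ⟨r, ?_, rfl⟩
      rw [hBmem, mul_comm, hr]
      exact hd2
  have hA : toK R K D * toK R K S ≤ Submodule.span R {π} * (1 : Submodule R K) := by
    rw [Submodule.mul_le]
    intro ξ hξ η hη
    obtain ⟨d, hd, rfl⟩ := mem_toK.mp hξ
    obtain ⟨σ, hσ, rfl⟩ := mem_toK.mp hη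
    rw [hDdef, Ideal.mem_inf] at hd
    obtain ⟨hd1, hd2⟩ := hd
    rw [Ideal.mem_span_singleton'] at hd1 hd2
    obtain ⟨r, hr⟩ := hd1
    obtain ⟨r', hr'⟩ := hd2
    rw [hSdef, Ideal.mem_span_pair] at hσ
    obtain ⟨α, β, hαβ⟩ := hσ
    rw [Submodule.mem_span_singleton_mul]
    refine ⟨algebraMap R K (α * r' + β * r), Submodule.mem_one.mpr ⟨α * r' + β * r, rfl⟩, ?_⟩
    rw [hπdef, ← map_mul, ← map_mul]
    apply congrArg
    calc (a * s₀) * (α * r' + β * r) = α * (a * (r' * s₀)) + β * (s₀ * (r * a)) := by ring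
      _ = α * (a * d) + β * (s₀ * d) := by rw [hr, hr']
      _ = d * σ := by rw [← hαβ]; ring
  have hB : algebraMap R K (a * s₀) ∈ tOp (toK R K D * toK R K S) := by
    apply w_le_t
    intro M hM
    rcases val_total hR hM (algebraMap R K a) (algebraMap R K s₀)
      with ⟨v, hv, hcomp⟩ | ⟨v, hv, hcomp⟩
    · -- f a = f s₀ * v
      obtain ⟨σ, hσM, hvσ⟩ := hv
      obtain ⟨c, hc⟩ := Submodule.mem_one.mp hvσ
      refine ⟨σ, hσM, ?_⟩
      have hsc : s₀ * c ∈ D := by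
        rw [hDdef, Ideal.mem_inf]
        constructor
        · rw [Ideal.mem_span_singleton']
          refine ⟨σ, IsFractionRing.injective R K ?_⟩
          rw [map_mul, map_mul, hc, hcomp]
          ring
        · exact Ideal.mem_span_singleton'.mpr ⟨c, mul_comm c s₀⟩
      have he : algebraMap R K (a * s₀) * algebraMap R K σ =
          algebraMap R K (s₀ * c) * algebraMap R K s₀ := by
        rw [map_mul, map_mul, hc, hcomp]
        ring
      rw [he]
      exact Submodule.mul_mem_mul (mem_toK.mpr ⟨s₀ * c, hsc, rfl⟩)
        (mem_toK.mpr ⟨s₀, Ideal.subset_span (by simp), rfl⟩)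
    · -- f s₀ = f a * v
      obtain ⟨σ, hσM, hvσ⟩ := hv
      obtain ⟨c, hc⟩ := Submodule.mem_one.mp hvσ
      refine ⟨σ, hσM, ?_⟩
      have hac : a * c ∈ D := by
        rw [hDdef, Ideal.mem_inf]
        refine ⟨Ideal.mem_span_singleton'.mpr ⟨c, mul_comm c a⟩, ?_⟩
        rw [Ideal.mem_span_singleton']
        refine ⟨σ, IsFractionRing.injective R K ?_⟩
        rw [map_mul, map_mul, hc, hcomp]
        ring
      have he : algebraMap R K (a * s₀) * algebraMap R K σ =
          algebraMap R K (a * c) * algebraMap R K a := by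
        rw [map_mul, map_mul, hc, hcomp]
        ring
      rw [he]
      exact Submodule.mul_mem_mul (mem_toK.mpr ⟨a * c, hac, rfl⟩)
        (mem_toK.mpr ⟨a, Ideal.subset_span (by simp), rfl⟩)
  have hDinv : tOp (toK R K D * dual (toK R K D)) = 1 := by
    apply le_antisymm
    · have h2 := tOp_mono (mul_dual_le_one (toK R K D))
      rwa [tOp_one] at h2
    · have hGD : Submodule.span R {π⁻¹} * toK R K S ≤ dual (toK R K D) := by
        intro g hg
        rw [mem_dual]
        intro y hy
        have h3 : g * y ∈ Submodule.span R {π⁻¹} * toK R K S * toK R K D :=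
          Submodule.mul_mem_mul hg hy
        have h4 : Submodule.span R {π⁻¹} * toK R K S * toK R K D ≤ 1 := by
          calc Submodule.span R {π⁻¹} * toK R K S * toK R K D
              = Submodule.span R {π⁻¹} * (toK R K D * toK R K S) := by
                rw [mul_assoc, mul_comm (toK R K S)]
            _ ≤ Submodule.span R {π⁻¹} * (Submodule.span R {π} * 1) :=
                mul_le_mul' le_rfl hA
            _ = 1 := by rw [← mul_assoc, Uc_mul_Uc, inv_mul_cancel₀ hπ0, Uc_one, one_mul]
        exact h4 h3
      have h5 : Submodule.span R {π⁻¹} * (toK R K D * toK R K S) ≤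
          toK R K D * dual (toK R K D) := by
        have e : Submodule.span R {π⁻¹} * (toK R K D * toK R K S) =
            toK R K D * (Submodule.span R {π⁻¹} * toK R K S) := by
          rw [← mul_assoc, mul_comm (Submodule.span R {π⁻¹}) (toK R K D), mul_assoc]
        rw [e]
        exact mul_le_mul' le_rfl hGD
      calc (1 : Submodule R K)
          = Submodule.span R {π⁻¹} * Submodule.span R {π} := by
            rw [Uc_mul_Uc, inv_mul_cancel₀ hπ0, Uc_one]
        _ ≤ Submodule.span R {π⁻¹} * tOp (toK R K D * toK R K S) := by
            refine mul_le_mul' le_rfl ?_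
            refine Submodule.span_le.mpr (Set.singleton_subset_iff.mpr ?_)
            rw [hπdef]
            exact hB
        _ = tOp (Submodule.span R {π⁻¹} * (toK R K D * toK R K S)) :=
            (tOp_Uc_mul (inv_ne_zero hπ0) _).symm
        _ ≤ tOp (toK R K D * dual (toK R K D)) := tOp_mono h5
  have hdualB : dual (toK R K (condIdeal R K u)) =
      Submodule.span R {algebraMap R K a} * dual (toK R K D) := by
    rw [hBrep, dual_Uc_mul (inv_ne_zero hfa), inv_inv]
  unfold IsTInvertible
  rw [hdualB, hBrep, mul_mul_mul_comm, Uc_mul_Uc, inv_mul_cancel₀ hfa, Uc_one, one_mul]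
  exact hDinv

end MainLemmas3

section MainLemmas4

set_option linter.unusedSectionVars false
set_option maxHeartbeats 1000000

variable {R : Type*} [CommRing R] [IsDomain R]
variable {K : Type*} [Field K] [Algebra R K] [IsFractionRing R K]

lemma tIdempotent_of_strict (hR : IsPVMD R K) (P : Ideal R) (hP : P.IsPrime)
    (htP : IsTIdeal K P)
    {u : K} (huΩ : u ∈ kaplansky K P) (huT : u ∉ nagata K P) :
    toK R K P = tOp (toK R K (P * P)) := by
  set B := condIdeal R K u with hBdef
  have hBt : tOp (toK R K B) = toK R K B := condIdeal_tIdeal u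
  have hradB : B.radical = P := radical_condIdeal hR P hP huΩ huT
  have hnpow : ∀ n : ℕ, ¬ P ^ (n + 1) ≤ B := by
    intro n h
    apply huT
    rw [mem_nagata]
    exact ⟨n, fun y hy => (h hy : y ∈ B)⟩
  refine le_antisymm ?_ ?_
  swap
  · have h1 : toK R K (P * P) ≤ toK R K P := toK_mono Ideal.mul_le_left
    have h2 := tOp_mono h1
    rwa [htP] at h2
  by_contra hnle
  obtain ⟨ξ, hξP, hξn⟩ := SetLike.not_le_iff_exists.mp hnle
  obtain ⟨x, hxP, rfl⟩ := mem_toK.mp hξP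
  have hx0 : x ≠ 0 := by
    intro h
    subst h
    rw [map_zero] at hξn
    exact hξn (Submodule.zero_mem _)
  obtain ⟨M₀, hM₀, hxM₀⟩ := not_mem_tOp hξn
  have hPM₀ : P ≤ M₀ := by
    by_contra hn
    rw [SetLike.not_le_iff_exists] at hn
    obtain ⟨s, hsP, hsM⟩ := hn
    apply hxM₀
    have hmem : x * (s * s) ∈ P * P := by
      have h3 : (x * s) * s ∈ P * P :=
        Ideal.mul_mem_mul (Ideal.mul_mem_right _ _ hxP) hsP
      rwa [mul_assoc] at h3
    exact ⟨s * s, fun h => hsM ((tmax_isPrime hM₀).mem_of_pow_mem 2 (by rw [pow_two]; exact h)),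
      mem_toK.mpr ⟨x * (s * s), hmem, by rw [map_mul]⟩⟩
  have hxP2 : ∀ s : R, s ∉ P → ∀ q ∈ P * P,
      algebraMap R K x * algebraMap R K s ≠ algebraMap R K q := by
    intro s hsP q hq heq
    apply hxM₀
    have hq' : algebraMap R K q ∈ toK R K P * toK R K P := by
      rw [← toK_mul]
      exact mem_toK.mpr ⟨q, hq, rfl⟩
    obtain ⟨η, hη, ζ, hζ, v, hv, hrepr⟩ := lS_rep_mul hR hM₀ _ _ hq'
    rcases val_total hR hM₀ (algebraMap R K s) η with ⟨w, hw, hcomp⟩ | ⟨w, hw, hcomp⟩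
    · exfalso
      have h6 : algebraMap R K s ∈ lS K M₀ (toK R K P) := by
        rw [hcomp]
        exact lS_absorb (tmax_isPrime hM₀) (subset_lS hM₀.1 _ hη) hw
      exact hsP (algebraMap_mem_lS_toK hP hPM₀ h6)
    · obtain ⟨p, hp, hpη⟩ := mem_toK.mp hη
      obtain ⟨σ₀, hσ₀, hwσ⟩ := hw
      obtain ⟨c, hc⟩ := Submodule.mem_one.mp hwσ
      have hs0 : s ≠ 0 := fun h => hsP (h ▸ P.zero_mem)
      have hfs0 : algebraMap R K s ≠ 0 := by
        rw [map_ne_zero_iff _ (IsFractionRing.injective R K)]; exact hs0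
      have hcs : c * s = p * σ₀ := by
        apply IsFractionRing.injective R K
        rw [map_mul, map_mul, hc, hpη, hcomp]
        ring
      have hcP : c ∈ P := by
        have h5 : c * s ∈ P := by
          rw [hcs]
          exact Ideal.mul_mem_right _ _ hp
        exact (hP.mem_or_mem h5).resolve_right hsP
      have hwP : w ∈ lS K M₀ (toK R K P) := ⟨σ₀, hσ₀, mem_toK.mpr ⟨c, hcP, hc⟩⟩
      have hfx : algebraMap R K x = w * ζ * v := by
        apply mul_right_cancel₀ hfs0
        calc algebraMap R K x * algebraMap R K s = algebraMap R K q := heq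
          _ = η * ζ * v := hrepr
          _ = w * ζ * v * algebraMap R K s := by rw [hcomp]; ring
      rw [hfx]
      have h7 : w * ζ ∈ lS K M₀ (toK R K P * toK R K P) :=
        lS_mul (tmax_isPrime hM₀) hwP (subset_lS hM₀.1 _ hζ)
      have h8 : w * ζ * v ∈ lS K M₀ (toK R K P * toK R K P) :=
        lS_absorb (tmax_isPrime hM₀) h7 hv
      rwa [← toK_mul] at h8
  have hCC : ∀ M : Ideal R, IsTMaximal K M → P ≤ M →
      ∀ y ∈ lS K M (toK R K P), ∀ z ∈ lS K M (toK R K P),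
      ∃ v ∈ lS K M (1 : Submodule R K), y * z = algebraMap R K x * v := by
    intro M hM hPM y hy z hz
    rcases val_total hR hM (algebraMap R K x) (y * z) with ⟨v, hv, hcomp⟩ | ⟨v, hv, hcomp⟩
    · exfalso
      have h1 : y * z ∈ lS K M (toK R K (P * P)) := by
        rw [toK_mul]
        exact lS_mul (tmax_isPrime hM) hy hz
      have h2 : algebraMap R K x ∈ lS K M (toK R K (P * P)) := by
        rw [hcomp]
        exact lS_absorb (tmax_isPrime hM) h1 hv
      obtain ⟨s, hs, hfs⟩ := h2
      obtain ⟨q, hq, hfq⟩ := mem_toK.mp hfs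
      exact hxP2 s (fun h => hs (hPM h)) q hq hfq.symm
    · exact ⟨v, hv, hcomp⟩
  have hbase : ∀ M : Ideal R, IsTMaximal K M → P ≤ M →
      ∀ ξ ∈ toK R K (P * P), ∃ v ∈ lS K M (1 : Submodule R K),
        ξ = algebraMap R K x * v := by
    intro M hM hPM ξ hξ
    rw [toK_mul] at hξ
    refine Submodule.mul_induction_on hξ ?_ ?_
    · intro η hη ζ hζ
      exact hCC M hM hPM η (subset_lS hM.1 _ hη) ζ (subset_lS hM.1 _ hζ)
    · rintro ξ₁ ξ₂ ⟨v₁, hv₁, h₁⟩ ⟨v₂, hv₂, h₂⟩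
      exact ⟨v₁ + v₂, lS_add (tmax_isPrime hM) hv₁ hv₂, by rw [h₁, h₂, mul_add]⟩
  have hpowdom : ∀ M : Ideal R, IsTMaximal K M → P ≤ M → ∀ m : ℕ,
      ∀ ξ ∈ toK R K ((P * P) ^ (m + 1)),
      ∃ v ∈ lS K M (1 : Submodule R K), ξ = (algebraMap R K x) ^ (m + 1) * v := by
    intro M hM hPM m
    induction m with
    | zero =>
      intro ξ hξ
      rw [pow_one] at hξ
      obtain ⟨v, hv, h⟩ := hbase M hM hPM ξ hξ
      exact ⟨v, hv, by rw [pow_one]; exact h⟩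
    | succ l ih =>
      intro ξ hξ
      rw [pow_succ, toK_mul] at hξ
      refine Submodule.mul_induction_on hξ ?_ ?_
      · intro η hη ζ hζ
        obtain ⟨v₁, hv₁, h₁⟩ := ih η hη
        obtain ⟨v₂, hv₂, h₂⟩ := hbase M hM hPM ζ hζ
        refine ⟨v₁ * v₂, lS_absorb (tmax_isPrime hM) hv₁ hv₂, ?_⟩
        rw [h₁, h₂, pow_succ]
        ring
      · rintro ξ₁ ξ₂ ⟨v₁, hv₁, h₁⟩ ⟨v₂, hv₂, h₂⟩
        exact ⟨v₁ + v₂, lS_add (tmax_isPrime hM) hv₁ hv₂, by rw [h₁, h₂, mul_add]⟩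
  have hxB : ∃ k : ℕ, k ≠ 0 ∧ x ^ k ∈ B := by
    have hx : x ∈ B.radical := hradB.symm ▸ hxP
    obtain ⟨k, hk⟩ := Ideal.mem_radical_iff.mp hx
    refine ⟨k, ?_, hk⟩
    intro h
    rw [h, pow_zero, hBdef] at hk
    obtain ⟨r', hr'⟩ := mem_condIdeal.mp hk
    rw [map_one, mul_one] at hr'
    apply huT
    rw [hr']
    exact (nagata K P).algebraMap_mem r'
  obtain ⟨k, hk0, hkB⟩ := hxB
  have hP2k : (P * P) ^ k ≤ B := by
    intro r hr
    have hrt : algebraMap R K r ∈ tOp (toK R K B) := by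
      apply w_le_t
      intro M hM
      by_cases hBM : B ≤ M
      · have hPM : P ≤ M := by
          rw [← hradB]
          exact ((tmax_isPrime hM).radical_le_iff).mpr hBM
        have ek : k - 1 + 1 = k := by omega
        have hr' : algebraMap R K r ∈ toK R K ((P * P) ^ (k - 1 + 1)) := by
          rw [ek]
          exact mem_toK.mpr ⟨r, hr, rfl⟩
        obtain ⟨v, hv, hrep⟩ := hpowdom M hM hPM (k - 1) _ hr'
        rw [ek] at hrep
        rw [hrep, ← map_pow]
        exact lS_absorb (tmax_isPrime hM)
          (subset_lS hM.1 _ (mem_toK.mpr ⟨x ^ k, hkB, rfl⟩)) hv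
      · rw [SetLike.not_le_iff_exists] at hBM
        obtain ⟨s, hsB, hsM⟩ := hBM
        exact ⟨s, hsM, mem_toK.mpr ⟨r * s, Ideal.mul_mem_left _ _ hsB, by rw [map_mul]⟩⟩
    rw [hBt] at hrt
    exact algebraMap_mem_toK_iff.mp hrt
  apply hnpow (2 * k - 1)
  have e : 2 * k - 1 + 1 = 2 * k := by omega
  rw [e]
  intro r hr
  apply hP2k
  have e2 : (P * P) ^ k = P ^ (2 * k) := by
    rw [← pow_two, ← pow_mul]
  rw [e2]
  exact hr

theorem statement_19' (hR : IsPVMD R K) (P : Ideal R) (hbot : P ≠ ⊥) (hP : P.IsPrime)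
    (htP : IsTIdeal K P) (hnmax : ¬ IsTMaximal K P) :
    ((nagata K P : Set K) ⊂ (kaplansky K P : Set K) ↔
      toK R K P = tOp (toK R K (P * P)) ∧
        ∃ I : Ideal R, IsTInvertible K I ∧ I.radical = P) := by
  constructor
  · intro h
    obtain ⟨u, huΩ, huT⟩ := Set.exists_of_ssubset h
    rw [SetLike.mem_coe] at huΩ
    have huT' : u ∉ nagata K P := fun h' => huT (SetLike.mem_coe.mpr h')
    have hu0 : u ≠ 0 := by
      intro h'
      exact huT' (h' ▸ (nagata K P).zero_mem)
    exact ⟨tIdempotent_of_strict hR P hP htP huΩ huT',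
      condIdeal R K u, condIdeal_tInvertible hR hu0, radical_condIdeal hR P hP huΩ huT'⟩
  · rintro ⟨h1, I, hti, hrad⟩
    exact statement_19_mpr P hP htP h1 I hti hrad

end MainLemmas4

section Statements

variable {R : Type*} [CommRing R] [IsDomain R]
variable {K : Type*} [Field K] [Algebra R K] [IsFractionRing R K]

/-- Let `R` be a PVMD and `P` a `t`-prime ideal of `R` that is not
`t`-maximal. Then `T(P) ⊊ Ω(P)` iff `P = (P²)_t` and `P = √I` for some `t`-invertible
ideal `I` of `R`. -/
theorem statement_19 (hR : IsPVMD R K) (P : Ideal R) (hbot : P ≠ ⊥) (hP : P.IsPrime)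
    (htP : IsTIdeal K P) (hnmax : ¬ IsTMaximal K P) :
    ((nagata K P : Set K) ⊂ (kaplansky K P : Set K) ↔
      toK R K P = tOp (toK R K (P * P)) ∧
        ∃ I : Ideal R, IsTInvertible K I ∧ I.radical = P) :=
  statement_19' hR P hbot hP htP hnmax

end Statements

end

end PVMDPaper
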